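/- Let b ∈ (0,1), a > 0, k₀ ≥ 0 an integer, and let {c_l} be a real sequence with |c_l| ≤ C₀/(l+k₀)^{2b} for some constant C₀ and all l ≥ 1. Then Σ_{l=1}^{k} ( ∏_{i=l}^{k} (1 − a/(i+k₀)^b) ) · c_l = O(1/k^b); that is, there exists a constant C such that | Σ_{l=1}^{k} ( ∏_{i=l}^{k} (1 − a/(i+k₀)^b) ) c_l | ≤ C/k^b for all sufficiently large k. -/

import Mathlib

open Filter Real
open scoped Topology

set_option maxHeartbeats 1000000 in
/-- Auxiliary real-arithmetic step for the induction in `sum_prod_one_sub_bound`. -/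
lemma aux_step_sum_prod (a b kr A C C₀ x S cc : ℝ)
    (ha : 0 < a) (hb0 : 0 < b) (hb1 : b < 1) (hkr : 0 ≤ kr)
    (hA : A = a / (1 + kr) ^ b) (hx1 : 1 ≤ x)
    (hgle : a ≤ ((x+1)+kr)^b)
    (hB : (x+1)^(b-1) ≤ A/(4*b))
    (hC0 : 0 ≤ C) (hC₀ : 0 ≤ C₀) (r4 : C₀ ≤ C*A/2)
    (hS : |S| ≤ C / x^b)
    (hcc : |cc| ≤ C₀ / ((x+1)+kr)^(2*b)) :
    |(1 - a/((x+1)+kr)^b) * (S + cc)| ≤ C/(x+1)^b := by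
  have hxp : 0 < x := by linarith
  have hdpos : (0:ℝ) < (x+1)+kr := by linarith
  have hApos : 0 < A := by
    rw [hA]; exact div_pos ha (rpow_pos_of_pos (by linarith) b)
  set γ : ℝ := a/((x+1)+kr)^b with hγdef
  have hγpos : 0 < γ := div_pos ha (rpow_pos_of_pos hdpos b)
  have hγ1 : γ ≤ 1 := by
    rw [hγdef, div_le_one (rpow_pos_of_pos hdpos b)]; exact hgle
  have h1γ : 0 ≤ 1 - γ := by linarith
  set u : ℝ := (x+1)^b with hudef
  set xb : ℝ := x^b with hxbdef
  have hu : 0 < u := rpow_pos_of_pos (by linarith) b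
  have hxb : 0 < xb := rpow_pos_of_pos hxp b
  -- Bernoulli: u ≤ xb * (1 + b/x)
  have r1 : u ≤ xb * (1 + b/x) := by
    have hinv : (0:ℝ) ≤ 1/x := by positivity
    have hber : (1 + 1/x)^b ≤ 1 + b*(1/x) :=
      rpow_one_add_le_one_add_mul_self (by linarith) hb0.le hb1.le
    have he : u = xb * (1+1/x)^b := by
      rw [hudef, hxbdef, ← mul_rpow hxp.le (by positivity)]
      congr 1
      field_simp
    rw [he]
    calc xb * (1+1/x)^b ≤ xb * (1 + b*(1/x)) :=
          mul_le_mul_of_nonneg_left hber hxb.le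
      _ = xb * (1 + b/x) := by ring
  -- lower bound on γ : A/u ≤ γ
  have r2 : A/u ≤ γ := by
    have hmul : ((x+1)+kr)^b ≤ (1+kr)^b * (x+1)^b := by
      rw [← mul_rpow (by positivity) (by linarith)]
      apply rpow_le_rpow hdpos.le _ hb0.le
      nlinarith
    calc A/u = a/((1+kr)^b*(x+1)^b) := by rw [hA, hudef, div_div]
      _ ≤ a/(((x+1)+kr)^b) :=
          div_le_div_of_nonneg_left ha.le (rpow_pos_of_pos hdpos b) hmul
  -- 2*b*u ≤ A*x
  have r3 : 2*b*u ≤ A*x := by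
    have he : u = (x+1)^(b-1) * (x+1) := by
      rw [hudef, ← Real.rpow_add_one (by linarith : x+1 ≠ 0) (b-1)]
      norm_num
    have hp : (0:ℝ) < (x+1)^(b-1) := rpow_pos_of_pos (by linarith) _
    have hB' : (x+1)^(b-1)*(4*b) ≤ A := (le_div_iff₀ (by positivity)).mp hB
    rw [he]
    nlinarith [mul_le_mul_of_nonneg_right hB' (by linarith : (0:ℝ) ≤ x+1),
      mul_le_mul_of_nonneg_left hx1 hApos.le]
  -- bound on cc in terms of u
  have hu2 : (x+1)^(2*b) = u*u := by
    rw [hudef, ← rpow_add (by linarith : (0:ℝ) < x+1)]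
    ring_nf
  have hcc' : |cc| ≤ C₀/(u*u) := by
    refine hcc.trans ?_
    rw [← hu2]
    exact div_le_div_of_nonneg_left hC₀ (by positivity)
      (rpow_le_rpow (by linarith) (by linarith) (by positivity))
  -- main analytic inequality
  have key : (1-γ)*(C/xb) + C₀/(u*u) ≤ C/u := by
    have hbx : b/x ≤ A/(2*u) := by
      rw [div_le_div_iff₀ hxp (by positivity)]
      nlinarith
    have hγged : A/(2*u) ≤ γ - b/x := by
      have he : A/u - A/(2*u) = A/(2*u) := by ring
      linarith
    have hmono : (1-γ)*(C/xb) ≤ C/u * ((1-γ)*(1+b/x)) := by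
      have h1' : C/xb ≤ C*(1+b/x)/u := by
        rw [div_le_div_iff₀ hxb hu]
        calc C*u ≤ C*(xb*(1+b/x)) := mul_le_mul_of_nonneg_left r1 hC0
          _ = C*(1+b/x)*xb := by ring
      calc (1-γ)*(C/xb) ≤ (1-γ)*(C*(1+b/x)/u) := mul_le_mul_of_nonneg_left h1' h1γ
        _ = C/u * ((1-γ)*(1+b/x)) := by ring
    have hfac : (1-γ)*(1+b/x) ≤ 1 - A/(2*u) := by
      have e : (1-γ)*(1+b/x) = 1 - (γ - b/x) - γ*(b/x) := by ring
      have hγb : 0 ≤ γ*(b/x) := by positivity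
      linarith
    have hctail : C₀/(u*u) ≤ C/u * (A/(2*u)) := by
      have he : C/u*(A/(2*u)) = (C*A/2)/(u*u) := by ring
      rw [he]
      exact div_le_div_of_nonneg_right r4 (by positivity)
    calc (1-γ)*(C/xb) + C₀/(u*u)
        ≤ C/u*((1-γ)*(1+b/x)) + C/u*(A/(2*u)) := add_le_add hmono hctail
      _ ≤ C/u*(1 - A/(2*u)) + C/u*(A/(2*u)) :=
          add_le_add (mul_le_mul_of_nonneg_left hfac (by positivity)) le_rfl
      _ = C/u := by ring
  -- assemble
  calc |(1-γ)*(S+cc)| = (1-γ) * |S+cc| := by rw [abs_mul, abs_of_nonneg h1γ]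
    _ ≤ (1-γ) * (C/xb + |cc|) :=
        mul_le_mul_of_nonneg_left ((abs_add_le _ _).trans (add_le_add hS le_rfl)) h1γ
    _ ≤ (1-γ)*(C/xb) + C₀/(u*u) := by
        nlinarith [mul_nonneg hγpos.le (abs_nonneg cc)]
    _ ≤ C/u := key

/-- Lemma 3, second part, of the paper.
For `b ∈ (0,1)`, `a > 0`, an integer `k₀ ≥ 0` and a sequence `c_l` with
`|c_l| ≤ C₀/(l+k₀)^{2b}`, the weighted sum
`∑_{l=1}^k (∏_{i=l}^k (1 − a/(i+k₀)^b)) c_l` is `O(1/k^b)`. -/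
theorem sum_prod_one_sub_bound
    (a b : ℝ) (ha : 0 < a) (hb0 : 0 < b) (hb1 : b < 1) (k₀ : ℕ)
    (c : ℕ → ℝ) (C₀ : ℝ)
    (hc : ∀ l : ℕ, 1 ≤ l → |c l| ≤ C₀ / ((l : ℝ) + k₀) ^ (2 * b)) :
    ∃ C : ℝ, ∃ N : ℕ, ∀ k ≥ N,
      |∑ l ∈ Finset.Icc 1 k,
          (∏ i ∈ Finset.Icc l k, (1 - a / ((i : ℝ) + k₀) ^ b)) * c l| ≤
        C / (k : ℝ) ^ b := by
  have hk₀ : (0:ℝ) ≤ k₀ := Nat.cast_nonneg _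
  -- C₀ is nonnegative
  have hC₀ : 0 ≤ C₀ := by
    by_contra hneg
    push_neg at hneg
    have h := (abs_nonneg (c 1)).trans (hc 1 le_rfl)
    have : C₀ / (((1:ℕ):ℝ) + (k₀:ℝ)) ^ (2 * b) < 0 :=
      div_neg_of_neg_of_pos hneg (by positivity)
    linarith
  set A : ℝ := a / (1 + (k₀:ℝ)) ^ b with hAdef
  have hA : 0 < A := div_pos ha (rpow_pos_of_pos (by positivity) b)
  -- the recursion
  have hrec : ∀ m : ℕ,
      (∑ l ∈ Finset.Icc 1 (m+1),
          (∏ i ∈ Finset.Icc l (m+1), (1 - a / ((i : ℝ) + k₀) ^ b)) * c l)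
      = (1 - a / (((m:ℝ)+1) + k₀) ^ b) *
        ((∑ l ∈ Finset.Icc 1 m,
          (∏ i ∈ Finset.Icc l m, (1 - a / ((i : ℝ) + k₀) ^ b)) * c l) + c (m+1)) := by
    intro m
    rw [Finset.sum_Icc_succ_top (by omega : 1 ≤ m+1)]
    have h2 : ∀ l ∈ Finset.Icc 1 m,
        (∏ i ∈ Finset.Icc l (m+1), (1 - a / ((i:ℝ)+k₀)^b)) * c l
        = (1 - a/(((m:ℝ)+1)+k₀)^b) *
          ((∏ i ∈ Finset.Icc l m, (1 - a/((i:ℝ)+k₀)^b)) * c l) := by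
      intro l hl
      have hlm : l ≤ m + 1 := (Finset.mem_Icc.mp hl).2.trans (Nat.le_succ m)
      rw [Finset.prod_Icc_succ_top hlm]
      push_cast
      ring
    rw [Finset.sum_congr rfl h2, ← Finset.mul_sum, Finset.Icc_self, Finset.prod_singleton]
    push_cast
    ring
  -- choose N₀ so that the eventual conditions hold
  have ht : Tendsto (fun m:ℕ => (m:ℝ)) atTop atTop := tendsto_natCast_atTop_atTop
  have e1 : ∀ᶠ m:ℕ in atTop, a ≤ ((m:ℝ)+k₀)^b := by
    have h : Tendsto (fun m:ℕ => ((m:ℝ)+k₀)^b) atTop atTop :=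
      (tendsto_rpow_atTop hb0).comp (tendsto_atTop_add_const_right _ _ ht)
    exact h.eventually_ge_atTop a
  have e2 : ∀ᶠ m:ℕ in atTop, ((m:ℝ)+1)^(b-1) ≤ A/(4*b) := by
    have h0 : Tendsto (fun m:ℕ => ((m:ℝ)+1)^(b-1)) atTop (𝓝 0) := by
      have h := tendsto_rpow_neg_atTop (y := 1-b) (by linarith)
      have h' := h.comp (tendsto_atTop_add_const_right atTop (1:ℝ) ht)
      simpa [neg_sub, Function.comp_def] using h'
    filter_upwards [h0.eventually (ge_mem_nhds (show (0:ℝ) < A/(4*b) by positivity))]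
      with m hm using hm
  obtain ⟨N₀, hN₀⟩ := Filter.eventually_atTop.mp (e1.and e2)
  set N : ℕ := max N₀ 1 with hNdef
  have hN1 : 1 ≤ N := le_max_right _ _
  set SN : ℝ := |∑ l ∈ Finset.Icc 1 N,
      (∏ i ∈ Finset.Icc l N, (1 - a / ((i : ℝ) + k₀) ^ b)) * c l| with hSNdef
  have hSN0 : 0 ≤ SN := abs_nonneg _
  set C : ℝ := max (2*C₀/A) (SN * (N:ℝ)^b) with hCdef
  have hC0 : 0 ≤ C := le_trans (by positivity) (le_max_left _ _)
  have r4 : C₀ ≤ C*A/2 := by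
    have h := le_max_left (2*C₀/A) (SN * (N:ℝ)^b)
    rw [div_le_iff₀ hA] at h
    linarith
  refine ⟨C, N, ?_⟩
  intro k hk
  induction k, hk using Nat.le_induction with
  | base =>
    have hNpos : (0:ℝ) < (N:ℝ)^b :=
      rpow_pos_of_pos (by exact_mod_cast hN1 : (0:ℝ) < (N:ℝ)) b
    rw [le_div_iff₀ hNpos]
    exact le_max_right _ _
  | succ k hk IH =>
    rw [hrec k]
    have hx1 : (1:ℝ) ≤ (k:ℝ) := by exact_mod_cast hN1.trans hk
    have hgle : a ≤ (((k:ℝ)+1)+(k₀:ℝ))^b := by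
      have h := (hN₀ (k+1) (by have := (le_max_left N₀ 1).trans hk; omega)).1
      push_cast at h
      exact h
    have hB : (((k:ℝ)+1))^(b-1) ≤ A/(4*b) := (hN₀ k ((le_max_left N₀ 1).trans hk)).2
    have hcc : |c (k+1)| ≤ C₀ / (((k:ℝ)+1)+(k₀:ℝ))^(2*b) := by
      have h := hc (k+1) (by omega)
      push_cast at h
      exact h
    have hmain := aux_step_sum_prod a b (k₀:ℝ) A C C₀ (k:ℝ)
      (∑ l ∈ Finset.Icc 1 k,
        (∏ i ∈ Finset.Icc l k, (1 - a / ((i : ℝ) + k₀) ^ b)) * c l)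
      (c (k+1)) ha hb0 hb1 hk₀ hAdef hx1 hgle hB hC0 hC₀ r4 IH hcc
    calc |(1 - a / (((k:ℝ)+1) + k₀) ^ b) *
          ((∑ l ∈ Finset.Icc 1 k,
            (∏ i ∈ Finset.Icc l k, (1 - a / ((i : ℝ) + k₀) ^ b)) * c l) + c (k+1))|
        ≤ C/(((k:ℝ)+1))^b := hmain
      _ = C / (((k+1:ℕ)):ℝ)^b := by push_cast; ring_nf
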